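/- The greedy algorithm, which inserts each element σ(i) of a signed permutation into the free slot with the largest compatible value among all heaps built so far (slots carry a polarity determined by the alternating-sign rule), and starts a new heap when no compatible slot exists, produces a decomposition of (σ,τ) into the minimum possible number of k-ary min-heap-ordered trees. -/

import Mathlib

/-- `σ i` may be inserted as a child of `σ j` at step `i` of a heap
decomposition encoded by `parent`: `j` is earlier, `σ j < σ i`, the signs
alternate, and `σ j` has fewer than `k` children so far (a free slot of value
`σ j` and polarity `−τ j = τ i` exists). -/
def Compat (k n : ℕ) (σ : Equiv.Perm (Fin n)) (τ : Fin n → ℤ)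
    (parent : Fin n → Option (Fin n)) (i j : Fin n) : Prop :=
  j < i ∧ σ j < σ i ∧ τ i = -τ j ∧
    (Finset.univ.filter
      (fun i' : Fin n => parent i' = some j ∧ i' < i)).card < k

/-- A valid decomposition of the signed permutation `(σ, τ)` into `k`-ary
min-heap-ordered trees: each element either starts a new tree
(`parent i = none`) or is placed in a compatible slot. -/
def ValidDecomp (k n : ℕ) (σ : Equiv.Perm (Fin n)) (τ : Fin n → ℤ)
    (parent : Fin n → Option (Fin n)) : Prop :=
  ∀ i j : Fin n, parent i = some j → Compat k n σ τ parent i j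

/-- The number of trees of a decomposition. -/
def ntrees (n : ℕ) (parent : Fin n → Option (Fin n)) : ℕ :=
  (Finset.univ.filter (fun i : Fin n => parent i = none)).card

/-- The decomposition produced by the greedy algorithm: whenever a compatible
slot exists, the element is inserted into a compatible slot of largest value
(and a new tree is started only when no compatible slot exists). -/
def GreedyDecomp (k n : ℕ) (σ : Equiv.Perm (Fin n)) (τ : Fin n → ℤ)
    (parent : Fin n → Option (Fin n)) : Prop :=
  ValidDecomp k n σ τ parent ∧
    ∀ i : Fin n, (∃ j, Compat k n σ τ parent i j) →
      ∃ j, parent i = some j ∧ Compat k n σ τ parent i j ∧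
        ∀ j', Compat k n σ τ parent i j' → σ j' ≤ σ j

section Aux

open Finset

variable {k n : ℕ} {σ : Equiv.Perm (Fin n)} {τ : Fin n → ℤ}

theorem compat_congr {p q : Fin n → Option (Fin n)} {i j : Fin n}
    (h : ∀ m, m < i → p m = q m) :
    Compat k n σ τ p i j ↔ Compat k n σ τ q i j := by
  unfold Compat
  have hset : (Finset.univ.filter (fun m : Fin n => p m = some j ∧ m < i))
      = Finset.univ.filter (fun m : Fin n => q m = some j ∧ m < i) := by
    apply Finset.filter_congr
    intro m _
    by_cases hm : m < i
    · rw [h m hm]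
    · simp [hm]
  rw [hset]

theorem cnt_le {p : Fin n → Option (Fin n)} (hp : ValidDecomp k n σ τ p)
    (j c : Fin n) :
    (Finset.univ.filter (fun m : Fin n => p m = some j ∧ m < c)).card ≤ k := by
  by_contra hlt
  push_neg at hlt
  set S := Finset.univ.filter (fun m : Fin n => p m = some j ∧ m < c) with hS
  have hne : S.Nonempty := Finset.card_pos.mp (by omega)
  set M := S.max' hne with hM
  have hMS : M ∈ S := S.max'_mem hne
  rw [hS, Finset.mem_filter] at hMS
  have hcompat := hp M j hMS.2.1
  have hsub : S.erase M ⊆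
      Finset.univ.filter (fun m : Fin n => p m = some j ∧ m < M) := by
    intro m hm
    rw [Finset.mem_erase] at hm
    have hmS := hm.2
    rw [hS, Finset.mem_filter] at hmS
    rw [Finset.mem_filter]
    exact ⟨Finset.mem_univ _, hmS.2.1,
      lt_of_le_of_ne (S.le_max' m hm.2) hm.1⟩
  have := Finset.card_le_card hsub
  rw [Finset.card_erase_of_mem (S.max'_mem hne)] at this
  have h4 := hcompat.2.2.2
  omega

/-- children count bound used throughout -/
theorem cnt_lt_of_compat {p : Fin n → Option (Fin n)} {i j : Fin n}
    (h : Compat k n σ τ p i j) :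
    (Finset.univ.filter (fun m : Fin n => p m = some j ∧ m < i)).card < k :=
  h.2.2.2

open Classical in
noncomputable def pick (k n : ℕ) (σ : Equiv.Perm (Fin n)) (τ : Fin n → ℤ)
    (p : Fin n → Option (Fin n)) (i : Fin n) : Option (Fin n) :=
  if h : ∃ j, Compat k n σ τ p i j ∧ ∀ j', Compat k n σ τ p i j' → σ j' ≤ σ j
  then some h.choose else none

theorem pick_eq_some {p : Fin n → Option (Fin n)} {i j : Fin n}
    (h : pick k n σ τ p i = some j) :
    Compat k n σ τ p i j ∧ ∀ j', Compat k n σ τ p i j' → σ j' ≤ σ j := by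
  classical
  unfold pick at h
  split at h
  · rename_i he
    rw [Option.some_inj] at h
    exact h ▸ he.choose_spec
  · exact absurd h (by simp)

theorem pick_eq_none {p : Fin n → Option (Fin n)} {i : Fin n}
    (h : pick k n σ τ p i = none) :
    ¬ ∃ j, Compat k n σ τ p i j := by
  classical
  unfold pick at h
  split at h
  · exact absurd h (by simp)
  · rename_i he
    intro ⟨j, hj⟩
    apply he
    have hne : (Finset.univ.filter (fun j' => Compat k n σ τ p i j')).Nonempty :=
      ⟨j, Finset.mem_filter.mpr ⟨Finset.mem_univ _, hj⟩⟩
    obtain ⟨b, hb, hmax⟩ := Finset.exists_max_image _ (fun j' => σ j') hne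
    rw [Finset.mem_filter] at hb
    exact ⟨b, hb.2, fun j' hj' =>
      hmax j' (Finset.mem_filter.mpr ⟨Finset.mem_univ _, hj'⟩)⟩

noncomputable def gA (k n : ℕ) (σ : Equiv.Perm (Fin n)) (τ : Fin n → ℤ) :
    ℕ → Fin n → Option (Fin n)
  | 0 => fun _ => none
  | t + 1 => fun i =>
      if i.val = t then pick k n σ τ (gA k n σ τ t) i else gA k n σ τ t i

theorem gA_mono : ∀ t' t : ℕ, t ≤ t' → ∀ i : Fin n, i.val < t →
    gA k n σ τ t' i = gA k n σ τ t i := by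
  intro t'
  induction t' with
  | zero => intro t ht i hi; omega
  | succ t' ih =>
    intro t ht i hi
    rcases Nat.eq_or_lt_of_le ht with h | h
    · rw [h]
    · have ht' : t ≤ t' := by omega
      have : i.val ≠ t' := by omega
      show (if i.val = t' then _ else gA k n σ τ t' i) = _
      rw [if_neg this, ih t ht' i hi]

theorem gA_eq_pick (i : Fin n) :
    gA k n σ τ n i = pick k n σ τ (gA k n σ τ i.val) i := by
  have h1 : gA k n σ τ n i = gA k n σ τ (i.val + 1) i :=
    gA_mono n (i.val + 1) i.isLt i (Nat.lt_succ_self _)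
  rw [h1]
  show (if i.val = i.val then _ else _) = _
  rw [if_pos rfl]

theorem gA_agree_below (i m : Fin n) (hm : m < i) :
    gA k n σ τ i.val m = gA k n σ τ n m :=
  (gA_mono n i.val (le_of_lt i.isLt) m hm).symm

theorem compat_gA (i j : Fin n) :
    Compat k n σ τ (gA k n σ τ i.val) i j ↔ Compat k n σ τ (gA k n σ τ n) i j :=
  compat_congr (fun m hm => gA_agree_below i m hm)

theorem exists_greedy : ∃ g, GreedyDecomp k n σ τ g := by
  classical
  refine ⟨gA k n σ τ n, ?_, ?_⟩
  · intro i j hij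
    rw [gA_eq_pick] at hij
    exact (compat_gA i j).mp (pick_eq_some hij).1
  · intro i ⟨j, hj⟩
    have hj' : Compat k n σ τ (gA k n σ τ i.val) i j := (compat_gA i j).mpr hj
    cases hpick : pick k n σ τ (gA k n σ τ i.val) i with
    | none => exact absurd ⟨j, hj'⟩ (pick_eq_none hpick)
    | some j0 =>
      obtain ⟨hc, hmax⟩ := pick_eq_some hpick
      exact ⟨j0, (gA_eq_pick i).trans hpick, (compat_gA i j0).mp hc,
        fun j' hj'' => hmax j' ((compat_gA i j').mpr hj'')⟩



theorem cnt_congr {p q : Fin n → Option (Fin n)} {j m : Fin n}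
    (h : ∀ x, x < m → p x = q x) :
    (Finset.univ.filter (fun x : Fin n => p x = some j ∧ x < m))
      = Finset.univ.filter (fun x : Fin n => q x = some j ∧ x < m) := by
  apply Finset.filter_congr
  intro x _
  by_cases hx : x < m
  · rw [h x hx]
  · simp [hx]

theorem exchange (hk : 1 ≤ k) {g p : Fin n → Option (Fin n)}
    (hg : GreedyDecomp k n σ τ g) (hp : ValidDecomp k n σ τ p)
    (i : Fin n) (hagree : ∀ m, m < i → p m = g m) :
    ∃ p', ValidDecomp k n σ τ p' ∧ (∀ m, m ≤ i → p' m = g m) ∧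
      ntrees n p' ≤ ntrees n p := by
  classical
  have tr : ∀ j, Compat k n σ τ p i j ↔ Compat k n σ τ g i j :=
    fun j => compat_congr hagree
  have agree_le : ∀ (p' : Fin n → Option (Fin n)), p' i = g i →
      (∀ m, m < i → p' m = p m) → ∀ m, m ≤ i → p' m = g m := by
    intro p' hpi hpm m hm
    rcases lt_or_eq_of_le hm with h | h
    · rw [hpm m h, hagree m h]
    · rw [h, hpi]
  cases hgi : g i with
  | none =>
    refine ⟨p, hp, ?_, le_refl _⟩
    have hpi : p i = none := by
      cases hpival : p i with
      | none => rfl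
      | some j =>
        have hc : Compat k n σ τ g i j := (tr j).mp (hp i j hpival)
        obtain ⟨j', hgj', _⟩ := hg.2 i ⟨j, hc⟩
        rw [hgi] at hgj'; exact absurd hgj' (by simp)
    intro m hm
    rcases lt_or_eq_of_le hm with h | h
    · exact hagree m h
    · rw [h, hpi, hgi]
  | some j0 =>
    have hC0g : Compat k n σ τ g i j0 := hg.1 i j0 hgi
    have hmax : ∀ j', Compat k n σ τ g i j' → σ j' ≤ σ j0 := by
      obtain ⟨j, hj, _, hm⟩ := hg.2 i ⟨j0, hC0g⟩
      rw [hgi, Option.some_inj] at hj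
      exact hj ▸ hm
    have hC0p : Compat k n σ τ p i j0 := (tr j0).mpr hC0g
    by_cases hpi0 : p i = some j0
    · exact ⟨p, hp, agree_le p (hpi0.trans hgi.symm) (fun _ _ => rfl), le_refl _⟩
    set C := Finset.univ.filter (fun m : Fin n => p m = some j0 ∧ i < m) with hCdef
    by_cases hC : C.Nonempty
    · -- main case: evict least later child i1 of j0 and give it p i
      set i1 := C.min' hC with hi1def
      have hi1C : p i1 = some j0 ∧ i < i1 :=
        (Finset.mem_filter.mp (C.min'_mem hC)).2
      have hii1lt : i < i1 := hi1C.2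
      have hii1 : i ≠ i1 := ne_of_lt hii1lt
      have hmin : ∀ m, p m = some j0 → i < m → i1 ≤ m := by
        intro m h1 h2
        exact C.min'_le m (Finset.mem_filter.mpr ⟨Finset.mem_univ _, h1, h2⟩)
      set p' := Function.update (Function.update p i (some j0)) i1 (p i) with hp'def
      have hp'i1 : p' i1 = p i := Function.update_self _ _ _
      have hp'i : p' i = some j0 := by
        rw [hp'def, Function.update_of_ne hii1, Function.update_self]
      have hp'other : ∀ m, m ≠ i → m ≠ i1 → p' m = p m := by
        intro m h1 h2
        rw [hp'def, Function.update_of_ne h2, Function.update_of_ne h1]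
      have hbelow : ∀ m, m < i → p' m = p m := by
        intro m hm
        exact hp'other m (ne_of_lt hm) (ne_of_lt (lt_trans hm hii1lt))
      refine ⟨p', ?_, ?_, ?_⟩
      · -- validity
        intro m jm hm
        by_cases hmi : m = i
        · subst hmi
          rw [hp'i, Option.some_inj] at hm
          subst hm
          refine ⟨hC0p.1, hC0p.2.1, hC0p.2.2.1, ?_⟩
          rw [cnt_congr hbelow]
          exact hC0p.2.2.2
        by_cases hmi1 : m = i1
        · subst hmi1
          rw [hp'i1] at hm
          -- p i = some jm with jm the old parent of i
          have hCj1 : Compat k n σ τ p i jm := hp i jm hm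
          have hCj0i1 : Compat k n σ τ p i1 j0 := hp i1 j0 hi1C.1
          refine ⟨lt_trans hCj1.1 hii1lt, ?_, ?_, ?_⟩
          · exact lt_of_le_of_lt (hmax jm ((tr jm).mp hCj1)) hCj0i1.2.1
          · have h1 : τ i = -τ jm := hCj1.2.2.1
            have h2 : τ i = -τ j0 := hC0p.2.2.1
            have h3 : τ i1 = -τ j0 := hCj0i1.2.2.1
            rw [h3, ← h2, h1]
          · -- count: children of jm below i1 in p' = old ones minus i
            have hsub : (Finset.univ.filter (fun x : Fin n => p' x = some jm ∧ x < i1))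
                ⊆ (Finset.univ.filter (fun x : Fin n => p x = some jm ∧ x < i1)).erase i := by
              intro x hx
              obtain ⟨-, hx1, hx2⟩ := Finset.mem_filter.mp hx
              have hxi1 : x ≠ i1 := ne_of_lt hx2
              have hxi : x ≠ i := by
                intro h; subst h
                rw [hp'i, Option.some_inj] at hx1
                exact hpi0 (hm.trans (congrArg some hx1.symm))
              rw [Finset.mem_erase, Finset.mem_filter]
              exact ⟨hxi, Finset.mem_univ _, (hp'other x hxi hxi1) ▸ hx1, hx2⟩
            have hiin : i ∈ Finset.univ.filter (fun x : Fin n => p x = some jm ∧ x < i1) :=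
              Finset.mem_filter.mpr ⟨Finset.mem_univ _, hm, hii1lt⟩
            have h1 := Finset.card_le_card hsub
            rw [Finset.card_erase_of_mem hiin] at h1
            have h2 := cnt_le hp jm i1
            have h3 : 1 ≤ (Finset.univ.filter (fun x : Fin n => p x = some jm ∧ x < i1)).card :=
              Finset.card_pos.mpr ⟨i, hiin⟩
            omega
        · -- generic m : injection via swap i i1
          rw [hp'other m hmi hmi1] at hm
          have hCm : Compat k n σ τ p m jm := hp m jm hm
          refine ⟨hCm.1, hCm.2.1, hCm.2.2.1, ?_⟩
          have hinj : (Finset.univ.filter (fun x : Fin n => p' x = some jm ∧ x < m)).card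
              ≤ (Finset.univ.filter (fun x : Fin n => p x = some jm ∧ x < m)).card := by
            apply Finset.card_le_card_of_injOn (fun x => Equiv.swap i i1 x)
            · intro x hx
              obtain ⟨-, hx1, hx2⟩ := Finset.mem_filter.mp hx
              by_cases hxi : x = i
              · subst hxi
                rw [hp'i, Option.some_inj] at hx1
                -- hx1 : j0 = jm
                beta_reduce; rw [Equiv.swap_apply_left]
                have hmj0 : p m = some j0 := by rw [hm, ← hx1]
                have hmC : i1 ≤ m := hmin m hmj0 hx2
                have hmC' : i1 < m := lt_of_le_of_ne hmC (fun h => hmi1 h.symm)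
                refine Finset.mem_filter.mpr ⟨Finset.mem_univ _, ?_, hmC'⟩
                rw [hi1C.1, hx1]
              by_cases hxi1 : x = i1
              · subst hxi1
                rw [hp'i1] at hx1
                beta_reduce; rw [Equiv.swap_apply_right]
                exact Finset.mem_filter.mpr ⟨Finset.mem_univ _, hx1,
                  lt_trans hii1lt hx2⟩
              · beta_reduce; rw [Equiv.swap_apply_of_ne_of_ne hxi hxi1]
                exact Finset.mem_filter.mpr ⟨Finset.mem_univ _,
                  (hp'other x hxi hxi1) ▸ hx1, hx2⟩
            · exact fun x _ y _ h => (Equiv.swap i i1).injective h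
          exact lt_of_le_of_lt hinj hCm.2.2.2
      · exact agree_le p' (hp'i.trans hgi.symm) hbelow
      · -- ntrees via swap injection
        unfold ntrees
        apply Finset.card_le_card_of_injOn (fun x => Equiv.swap i i1 x)
        · intro x hx
          obtain ⟨-, hx1⟩ := Finset.mem_filter.mp hx
          have hxi : x ≠ i := fun h => by rw [h, hp'i] at hx1; exact absurd hx1 (by simp)
          by_cases hxi1 : x = i1
          · subst hxi1
            rw [hp'i1] at hx1
            beta_reduce; rw [Equiv.swap_apply_right]
            exact Finset.mem_filter.mpr ⟨Finset.mem_univ _, hx1⟩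
          · beta_reduce; rw [Equiv.swap_apply_of_ne_of_ne hxi hxi1]
            exact Finset.mem_filter.mpr ⟨Finset.mem_univ _,
              (hp'other x hxi hxi1) ▸ hx1⟩
        · exact fun x _ y _ h => (Equiv.swap i i1).injective h
    · -- no later child of j0 : just move i to j0
      have hnolater : ∀ m, p m = some j0 → ¬ i < m := by
        intro m h1 h2
        exact hC ⟨m, Finset.mem_filter.mpr ⟨Finset.mem_univ _, h1, h2⟩⟩
      set p' := Function.update p i (some j0) with hp'def
      have hp'i : p' i = some j0 := Function.update_self _ _ _
      have hp'other : ∀ m, m ≠ i → p' m = p m :=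
        fun m h => Function.update_of_ne h _ _
      have hbelow : ∀ m, m < i → p' m = p m := fun m hm => hp'other m (ne_of_lt hm)
      refine ⟨p', ?_, agree_le p' (hp'i.trans hgi.symm) hbelow, ?_⟩
      · intro m jm hm
        by_cases hmi : m = i
        · subst hmi
          rw [hp'i, Option.some_inj] at hm
          subst hm
          refine ⟨hC0p.1, hC0p.2.1, hC0p.2.2.1, ?_⟩
          rw [cnt_congr hbelow]
          exact hC0p.2.2.2
        · rw [hp'other m hmi] at hm
          have hCm : Compat k n σ τ p m jm := hp m jm hm
          refine ⟨hCm.1, hCm.2.1, hCm.2.2.1, ?_⟩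
          have hsub : (Finset.univ.filter (fun x : Fin n => p' x = some jm ∧ x < m))
              ⊆ Finset.univ.filter (fun x : Fin n => p x = some jm ∧ x < m) := by
            intro x hx
            obtain ⟨-, hx1, hx2⟩ := Finset.mem_filter.mp hx
            by_cases hxi : x = i
            · subst hxi
              rw [hp'i, Option.some_inj] at hx1
              have hmj0 : p m = some j0 := by rw [hm, ← hx1]
              exact absurd hx2 (hnolater m hmj0)
            · exact Finset.mem_filter.mpr ⟨Finset.mem_univ _,
                (hp'other x hxi) ▸ hx1, hx2⟩
          exact lt_of_le_of_lt (Finset.card_le_card hsub) hCm.2.2.2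
      · unfold ntrees
        apply Finset.card_le_card
        intro x hx
        obtain ⟨-, hx1⟩ := Finset.mem_filter.mp hx
        have hxi : x ≠ i := fun h => by rw [h, hp'i] at hx1; exact absurd hx1 (by simp)
        exact Finset.mem_filter.mpr ⟨Finset.mem_univ _, (hp'other x hxi) ▸ hx1⟩

end Aux


/-- The greedy algorithm produces a decomposition of the signed permutation
`(σ, τ)` into the minimum possible number of `k`-ary min-heap-ordered trees:
a greedy decomposition exists, and any greedy decomposition uses at most as
many trees as any valid decomposition. -/
theorem stmt_14 (k n : ℕ) (hk : 1 ≤ k) (σ : Equiv.Perm (Fin n))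
    (τ : Fin n → ℤ) (hτ : ∀ i, τ i = 1 ∨ τ i = -1) :
    (∃ g : Fin n → Option (Fin n), GreedyDecomp k n σ τ g) ∧
      ∀ g p : Fin n → Option (Fin n),
        GreedyDecomp k n σ τ g → ValidDecomp k n σ τ p →
          ntrees n g ≤ ntrees n p := by
  refine ⟨exists_greedy, ?_⟩
  intro g p hg hp
  have main : ∀ t : ℕ, ∃ p', ValidDecomp k n σ τ p' ∧
      (∀ m : Fin n, m.val < t → p' m = g m) ∧ ntrees n p' ≤ ntrees n p := by
    intro t
    induction t with
    | zero => exact ⟨p, hp, fun m hm => absurd hm (by omega), le_refl _⟩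
    | succ t ih =>
      obtain ⟨p', hv, hag, hle⟩ := ih
      by_cases htn : t < n
      · set i : Fin n := ⟨t, htn⟩ with hidef
        obtain ⟨p'', hv'', hag'', hle''⟩ := exchange hk hg hv i
          (fun m hm => hag m (by simpa [Fin.lt_def, hidef] using hm))
        refine ⟨p'', hv'', ?_, le_trans hle'' hle⟩
        intro m hm
        exact hag'' m (by rw [Fin.le_def]; show m.val ≤ t; omega)
      · exact ⟨p', hv, fun m hm => hag m (by omega), hle⟩
  obtain ⟨p', hv, hag, hle⟩ := main n
  have hpg : p' = g := funext fun m => hag m m.isLt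
  exact hpg ▸ hle
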